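/- arXiv:2403.11727 — 8 statements merged into one kernel-verified Lean document; each statement's English description precedes it below -/
import Mathlib

section
/- Let n ≥ 1, λ ∈ ℝ, d ∈ ℝⁿ, and set d̄ := (1/n) Σᵢ dᵢ. Let V₁ ∈ ℝ^{s₁×n} and V₂ ∈ ℝ^{s₂×n} satisfy V₁e = 0 and V₂e = 0, let W ∈ ℝ^{(s₁+s₂)×n} be the vertical stacking of V₁ and V₂, and assume W·Wᵀ is invertible. Define S := {g ∈ ℝⁿ : eᵀg = eᵀd, V₁g = (1−λ)V₁d, V₂g = (1+λ)V₂d} and A := (1/n)J + Wᵀ(W Wᵀ)⁻¹ U, where U ∈ ℝ^{(s₁+s₂)×n} is the vertical stacking of (1−λ)V₁ and (1+λ)V₂. Then A·d ∈ S, and A·d is the unique point of S at minimal Euclidean distance from d̄·e; that is, ‖A d − d̄ e‖₂ < ‖g − d̄ e‖₂ for every g ∈ S with g ≠ A d. -/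
open Matrix

/-- Lemma `lemmaProjection`, full-row-rank case. With `W` the vertical
stacking of `V₁, V₂` (both annihilating `e`), `W Wᵀ` invertible,
`S = {g : eᵀg = eᵀd, V₁ g = (1−λ)V₁ d, V₂ g = (1+λ)V₂ d}`, and
`A = (1/n)J + Wᵀ (W Wᵀ)⁻¹ U` with `U` the stacking of `(1−λ)V₁` and `(1+λ)V₂`, the vector
`A d` lies in `S` and is the unique point of `S` closest to `d̄ e` in Euclidean distance. -/
theorem projection_matrix (n s1 s2 : ℕ) (hn : 0 < n) (lam : ℝ)
    (d : Fin n → ℝ)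
    (V1 : Matrix (Fin s1) (Fin n) ℝ) (V2 : Matrix (Fin s2) (Fin n) ℝ)
    (hV1e : V1.mulVec (fun _ => 1) = 0) (hV2e : V2.mulVec (fun _ => 1) = 0)
    (W : Matrix (Fin s1 ⊕ Fin s2) (Fin n) ℝ) (hW : W = Matrix.fromRows V1 V2)
    (hWW : IsUnit (W * Wᵀ).det)
    (U : Matrix (Fin s1 ⊕ Fin s2) (Fin n) ℝ)
    (hU : U = Matrix.fromRows ((1 - lam) • V1) ((1 + lam) • V2))
    (S : Set (Fin n → ℝ))
    (hS : S = {g | (∑ i, g i = ∑ i, d i) ∧ V1.mulVec g = (1 - lam) • V1.mulVec d ∧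
      V2.mulVec g = (1 + lam) • V2.mulVec d})
    (A : Matrix (Fin n) (Fin n) ℝ)
    (hA : A = (n : ℝ)⁻¹ • (Matrix.of fun _ _ => (1 : ℝ)) + Wᵀ * (W * Wᵀ)⁻¹ * U) :
    A.mulVec d ∈ S ∧
    ∀ g ∈ S, g ≠ A.mulVec d →
      Real.sqrt (∑ i, (A.mulVec d i - (∑ j, d j) / n) ^ 2) <
        Real.sqrt (∑ i, (g i - (∑ j, d j) / n) ^ 2) := by
  have hnR : (n : ℝ) ≠ 0 := Nat.cast_ne_zero.mpr hn.ne'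
  set e1 : Fin n → ℝ := fun _ => (1 : ℝ) with he1
  set cbar : ℝ := (∑ j, d j) / n with hcbar
  have hWe : W *ᵥ e1 = 0 := by
    rw [hW, Matrix.fromRows_mulVec, hV1e, hV2e]
    ext (i | i) <;> rfl
  have hWU : W * (Wᵀ * (W * Wᵀ)⁻¹ * U) = U := by
    rw [← Matrix.mul_assoc, ← Matrix.mul_assoc, Matrix.mul_nonsing_inv _ hWW, Matrix.one_mul]
  set q : Fin n → ℝ := (Wᵀ * (W * Wᵀ)⁻¹ * U) *ᵥ d with hq
  set p : Fin n → ℝ := fun i => cbar + q i with hpdef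
  have hp : A *ᵥ d = p := by
    funext i
    simp only [hA, Matrix.add_mulVec, Matrix.smul_mulVec, Pi.add_apply, Pi.smul_apply,
      smul_eq_mul, hpdef, hq]
    congr 1
    rw [hcbar, div_eq_inv_mul]
    congr 1
    simp [Matrix.mulVec, dotProduct, he1]
  have hWq : W *ᵥ q = U *ᵥ d := by
    rw [hq, Matrix.mulVec_mulVec, hWU]
  have hWp : W *ᵥ p = U *ᵥ d := by
    have hpe : p = cbar • e1 + q := by funext i; simp [hpdef, he1]
    rw [hpe, Matrix.mulVec_add, Matrix.mulVec_smul, hWe, smul_zero, zero_add, hWq]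
  have hqsum : ∑ i, q i = 0 := by
    have h1 : ∑ i, q i = e1 ⬝ᵥ q := by simp [dotProduct, he1]
    rw [h1, hq, Matrix.mul_assoc, ← Matrix.mulVec_mulVec, Matrix.dotProduct_mulVec,
      Matrix.vecMul_transpose, hWe, zero_dotProduct]
  have hpsum : ∑ i, p i = ∑ i, d i := by
    rw [hpdef]
    rw [Finset.sum_add_distrib, hqsum, add_zero, Finset.sum_const, Finset.card_fin,
      nsmul_eq_mul, hcbar, mul_div_cancel₀ _ hnR]
  have hV1p : V1 *ᵥ p = (1 - lam) • (V1 *ᵥ d) := by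
    funext i
    have h := congrFun hWp (Sum.inl i)
    rw [hW, hU, Matrix.fromRows_mulVec, Matrix.fromRows_mulVec] at h
    simpa [Matrix.smul_mulVec] using h
  have hV2p : V2 *ᵥ p = (1 + lam) • (V2 *ᵥ d) := by
    funext i
    have h := congrFun hWp (Sum.inr i)
    rw [hW, hU, Matrix.fromRows_mulVec, Matrix.fromRows_mulVec] at h
    simpa [Matrix.smul_mulVec] using h
  have hmem : A *ᵥ d ∈ S := by
    rw [hS, hp]
    exact ⟨hpsum, hV1p, hV2p⟩
  refine ⟨hmem, ?_⟩
  intro g hg hne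
  rw [hS] at hg
  obtain ⟨hg1, hg2, hg3⟩ := hg
  have hWg : W *ᵥ g = U *ᵥ d := by
    rw [hW, hU, Matrix.fromRows_mulVec, Matrix.fromRows_mulVec, hg2, hg3,
      Matrix.smul_mulVec, Matrix.smul_mulVec]
  have hcross : ∑ i, (g i - p i) * q i = 0 := by
    have hWgp : W *ᵥ (g - p) = 0 := by rw [Matrix.mulVec_sub, hWg, hWp, sub_self]
    have h1 : ∑ i, (g i - p i) * q i = (g - p) ⬝ᵥ q := by simp [dotProduct]
    rw [h1, hq, Matrix.mul_assoc, ← Matrix.mulVec_mulVec, Matrix.dotProduct_mulVec,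
      Matrix.vecMul_transpose, hWgp, zero_dotProduct]
  have hpc : ∀ i, p i - cbar = q i := by intro i; simp [hpdef]
  have hdecomp : ∑ i, (g i - cbar) ^ 2
      = ∑ i, (g i - p i) ^ 2 + 2 * ∑ i, (g i - p i) * q i + ∑ i, (q i) ^ 2 := by
    rw [Finset.mul_sum, ← Finset.sum_add_distrib, ← Finset.sum_add_distrib]
    refine Finset.sum_congr rfl fun i _ => ?_
    have h : g i - cbar = (g i - p i) + q i := by simp [hpdef]; ring
    rw [h]; ring
  have hne' : ∃ i, g i ≠ p i := Function.ne_iff.mp (by rwa [hp] at hne)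
  obtain ⟨i0, hi0⟩ := hne'
  have hpos : 0 < ∑ i, (g i - p i) ^ 2 :=
    Finset.sum_pos' (fun i _ => sq_nonneg _)
      ⟨i0, Finset.mem_univ i0, sq_pos_of_ne_zero (sub_ne_zero.mpr hi0)⟩
  have hlt : ∑ i, ((A *ᵥ d) i - (∑ j, d j) / (n:ℝ)) ^ 2 < ∑ i, (g i - (∑ j, d j) / (n:ℝ)) ^ 2 := by
    simp only [hp, ← hcbar]
    have hL : ∑ i, (p i - cbar) ^ 2 = ∑ i, q i ^ 2 :=
      Finset.sum_congr rfl fun i _ => by rw [hpc i]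
    rw [hL, hdecomp, hcross, mul_zero, add_zero]
    linarith
  exact Real.sqrt_lt_sqrt (Finset.sum_nonneg fun i _ => sq_nonneg _) hlt
end

section
/- Let n ≥ 2, λ ∈ ℝ, a ∈ ℝⁿ, and ε₀ > 0. Suppose that for every γ ∈ ℝⁿ with γ₁ = 0, γ ≥ 0 componentwise, and Σᵢ γᵢ = 1, and for every ε ∈ [0, ε₀], one has ⟨a, e₁ + εγ⟩ = 1 − λ(1 − (1+ε)/n). Then a = (1−λ)e₁ + (λ/n)e. -/
open Matrix

/-- core of Lemma `firstColumnA`. If `⟨a, e₁ + εγ⟩ = 1 − λ(1 − (1+ε)/n)` for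
every admissible profile `γ` (with `γ₁ = 0`, `γ ≥ 0`, `Σ γᵢ = 1`) and every `ε ∈ [0, ε₀]`,
then `a = (1−λ) e₁ + (λ/n) e`. -/
theorem first_row_identification (n : ℕ) (hn : 2 ≤ n) (lam : ℝ) (a : Fin n → ℝ)
    (ε₀ : ℝ) (hε₀ : 0 < ε₀)
    (h : ∀ γ : Fin n → ℝ, γ ⟨0, by omega⟩ = 0 → (∀ i, 0 ≤ γ i) → (∑ i, γ i = 1) →
      ∀ ε ∈ Set.Icc (0 : ℝ) ε₀,
        ∑ i, a i * ((Pi.single (⟨0, by omega⟩ : Fin n) 1 : Fin n → ℝ) + ε • γ) i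
          = 1 - lam * (1 - (1 + ε) / n)) :
    a = (1 - lam) • (Pi.single (⟨0, by omega⟩ : Fin n) 1 : Fin n → ℝ)
        + (lam / n) • (fun _ => (1 : ℝ)) := by
  set z : Fin n := ⟨0, by omega⟩ with hz
  have hn0 : (n : ℝ) ≠ 0 := by positivity
  have hj1 : (⟨1, by omega⟩ : Fin n) ≠ z := by simp [hz, Fin.ext_iff]
  -- key: for any γ admissible and ε, the sum equals a z + ε * ∑ a i * γ i
  have key : ∀ (γ : Fin n → ℝ) (ε : ℝ),
      ∑ i, a i * ((Pi.single z 1 : Fin n → ℝ) + ε • γ) i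
        = a z + ε * ∑ i, a i * γ i := by
    intro γ ε
    simp only [Pi.add_apply, Pi.smul_apply, smul_eq_mul, mul_add]
    rw [Finset.sum_add_distrib]
    congr 1
    · simp [Pi.single_apply, Finset.sum_ite_eq']
    · rw [Finset.mul_sum]; exact Finset.sum_congr rfl (fun i _ => by ring)
  -- with γ = single ⟨1⟩ 1 and ε = 0: a z value
  have hγ : ∀ j : Fin n, j ≠ z → ∀ ε ∈ Set.Icc (0:ℝ) ε₀,
      a z + ε * a j = 1 - lam * (1 - (1 + ε) / n) := by
    intro j hj ε hε
    have := h (Pi.single j 1) (by simp [Pi.single_apply, hj.symm, Ne.symm hj])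
      (fun i => by by_cases hi : i = j <;> simp [Pi.single_apply, hi])
      (by simp) ε hε
    rw [key] at this
    simpa [Pi.single_apply, Finset.sum_ite_eq'] using this
  have h0 : a z = 1 - lam * (1 - 1 / n) := by
    have := hγ ⟨1, by omega⟩ hj1 0 ⟨le_refl 0, le_of_lt hε₀⟩
    simpa using this
  have hj : ∀ j : Fin n, j ≠ z → a j = lam / n := by
    intro j hj
    have h1 := hγ j hj ε₀ ⟨le_of_lt hε₀, le_refl ε₀⟩
    rw [h0] at h1
    have : ε₀ * a j = ε₀ * (lam / n) := by field_simp at h1 ⊢; nlinarith [hε₀, h1]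
    exact mul_left_cancel₀ (ne_of_gt hε₀) this
  funext i
  by_cases hi : i = z
  · subst hi
    simp [h0, Pi.single_apply]
    field_simp
    ring
  · simp [hj i hi, Pi.single_apply, hi]
end

section
/- Let n, m ≥ 1 and λ ∈ (0,1). Let C, V ∈ ℝ^{m×n} satisfy Ve = 0 and VᵀC = Iₙ − (1/n)J. Let d ∈ ℝⁿ with d ≥ 0, C·d ≥ 0, and V·d ≥ 0 componentwise, and set d̄ := (1/n) Σᵢ dᵢ. Then g* := (1−λ)d + λ d̄ e belongs to F(d) := {g ∈ ℝⁿ : g ≥ 0, eᵀg = eᵀd, and (1−λ)Vd ≤ Vg ≤ (1+λ)Vd componentwise}, and g* is the unique minimizer of g ↦ ½‖g‖₂² over F(d). -/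
open Matrix

/-- The DC-OPF feasible set under the orientation with `Vd ≥ 0`:
`{g : g ≥ 0, eᵀg = eᵀd, (1−λ)Vd ≤ Vg ≤ (1+λ)Vd}`. -/
def dcopfFeasible (n m : ℕ) (lam : ℝ) (V : Matrix (Fin m) (Fin n) ℝ) (d : Fin n → ℝ) :
    Set (Fin n → ℝ) :=
  {g | (∀ i, 0 ≤ g i) ∧ (∑ i, g i = ∑ i, d i) ∧
    ∀ e, (1 - lam) * V.mulVec d e ≤ V.mulVec g e ∧ V.mulVec g e ≤ (1 + lam) * V.mulVec d e}

/-- Lemma `solutionCd`. If `Cd ≥ 0` (and `Vd ≥ 0`, `d ≥ 0`), then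
`g* = (1−λ)d + λ d̄ e` is feasible and is the unique minimizer of `½‖g‖²` over the DC-OPF
feasible set. -/
theorem closed_form_optimum (n m : ℕ) (hn : 0 < n) (hm : 0 < m)
    (lam : ℝ) (hlam : lam ∈ Set.Ioo (0 : ℝ) 1)
    (C V : Matrix (Fin m) (Fin n) ℝ)
    (hVe : V.mulVec (fun _ => 1) = 0)
    (hVC : Vᵀ * C = 1 - (n : ℝ)⁻¹ • (Matrix.of fun _ _ => (1 : ℝ)))
    (d : Fin n → ℝ) (hd : ∀ i, 0 ≤ d i)
    (hCd : ∀ i, 0 ≤ C.mulVec d i) (hVd : ∀ i, 0 ≤ V.mulVec d i) :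
    ((1 - lam) • d + (lam * ((∑ i, d i) / n)) • (fun _ => (1 : ℝ)))
      ∈ dcopfFeasible n m lam V d ∧
    ∀ g ∈ dcopfFeasible n m lam V d,
      g ≠ ((1 - lam) • d + (lam * ((∑ i, d i) / n)) • (fun _ => (1 : ℝ))) →
      (1 / 2 : ℝ) * ∑ i, (((1 - lam) • d
          + (lam * ((∑ j, d j) / n)) • (fun _ => (1 : ℝ)) : Fin n → ℝ) i) ^ 2
        < (1 / 2 : ℝ) * ∑ i, g i ^ 2 := by
  obtain ⟨hl0, hl1⟩ := hlam
  have hnR : (0:ℝ) < n := by exact_mod_cast hn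
  set db : ℝ := (∑ i, d i) / n with hdb
  set gs : Fin n → ℝ := (1 - lam) • d + (lam * db) • (fun _ => (1 : ℝ)) with hgs
  have hgsi : ∀ i, gs i = (1 - lam) * d i + lam * db := by
    intro i; simp [hgs, mul_comm]
  have hdsum0 : 0 ≤ ∑ i, d i := Finset.sum_nonneg fun i _ => hd i
  have hdb0 : 0 ≤ db := div_nonneg hdsum0 hnR.le
  have hVgs : V.mulVec gs = (1 - lam) • V.mulVec d := by
    rw [hgs, mulVec_add, mulVec_smul, mulVec_smul, hVe, smul_zero, add_zero]
  have hsumgs : ∑ i, gs i = ∑ i, d i := by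
    have : ∑ i, gs i = (1 - lam) * ∑ i, d i + (n : ℝ) * (lam * db) := by
      simp only [hgsi]
      rw [Finset.sum_add_distrib, ← Finset.mul_sum, Finset.sum_const, Finset.card_univ,
        Fintype.card_fin, nsmul_eq_mul]
    rw [this, hdb]
    field_simp
    ring
  have hfeas : gs ∈ dcopfFeasible n m lam V d := by
    refine ⟨fun i => ?_, hsumgs, fun e => ?_⟩
    · rw [hgsi]
      have := hd i
      nlinarith
    · rw [hVgs]
      constructor
      · simp [Pi.smul_apply, smul_eq_mul]
      · have := hVd e
        simp only [Pi.smul_apply, smul_eq_mul]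
        nlinarith
  refine ⟨hfeas, ?_⟩
  rintro g ⟨hg0, hgsum, hgflow⟩ hne
  set h : Fin n → ℝ := fun i => g i - gs i with hh
  have hsumh : ∑ i, h i = 0 := by
    simp [hh, Finset.sum_sub_distrib, hgsum, hsumgs]
  have hVh : ∀ e, 0 ≤ V.mulVec h e := by
    intro e
    have h1 : V.mulVec h = V.mulVec g - V.mulVec gs := by
      have : h = g - gs := rfl
      rw [this, mulVec_sub]
    rw [h1]
    have := (hgflow e).1
    rw [hVgs]
    simp only [Pi.sub_apply, Pi.smul_apply, smul_eq_mul]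
    linarith
  -- decomposition d = Vᵀ (C d) + db • 1
  have hdec : ∀ i, d i = Vᵀ.mulVec (C.mulVec d) i + db := by
    have h1 : (Vᵀ * C).mulVec d = Vᵀ.mulVec (C.mulVec d) := by
      rw [← mulVec_mulVec]
    intro i
    have h2 := congrFun h1.symm i
    rw [hVC] at h2
    have h3 : ((1 : Matrix (Fin n) (Fin n) ℝ)
        - (n : ℝ)⁻¹ • (Matrix.of fun _ _ => (1 : ℝ))).mulVec d i
        = d i - (∑ j, d j) / n := by
      rw [sub_mulVec]
      simp [mulVec, dotProduct, div_eq_inv_mul, Finset.mul_sum]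
    rw [h3] at h2
    rw [hdb]
    linarith
  have hdh : 0 ≤ ∑ i, d i * h i := by
    have e1 : ∑ i, d i * h i = ∑ i, Vᵀ.mulVec (C.mulVec d) i * h i + db * ∑ i, h i := by
      rw [Finset.mul_sum, ← Finset.sum_add_distrib]
      apply Finset.sum_congr rfl
      intro i _
      rw [hdec i]; ring
    rw [e1, hsumh, mul_zero, add_zero]
    have e2 : ∑ i, Vᵀ.mulVec (C.mulVec d) i * h i
        = (C.mulVec d) ⬝ᵥ (V.mulVec h) := by
      rw [dotProduct_mulVec]
      simp [dotProduct, vecMul, Matrix.mulVec, Matrix.transpose, dotProduct,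
        mul_comm]
    rw [e2]
    exact Finset.sum_nonneg fun e _ => mul_nonneg (hCd e) (hVh e)
  have hgsh : 0 ≤ ∑ i, gs i * h i := by
    have e1 : ∑ i, gs i * h i = (1 - lam) * ∑ i, d i * h i + (lam * db) * ∑ i, h i := by
      rw [Finset.mul_sum, Finset.mul_sum, ← Finset.sum_add_distrib]
      apply Finset.sum_congr rfl
      intro i _
      rw [hgsi i]; ring
    rw [e1, hsumh, mul_zero, add_zero]
    have : 0 ≤ 1 - lam := by linarith
    exact mul_nonneg this hdh
  have hhn0 : ∃ i, h i ≠ 0 := by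
    by_contra hc
    push_neg at hc
    apply hne
    funext i
    have := hc i
    rw [hh] at this
    simp only at this
    have : g i = gs i := by linarith [sub_eq_zero.mp this]
    simpa [hgs] using this
  obtain ⟨i0, hi0⟩ := hhn0
  have hhsq : 0 < ∑ i, h i ^ 2 := by
    apply Finset.sum_pos' (fun i _ => sq_nonneg _)
    exact ⟨i0, Finset.mem_univ i0, by positivity⟩
  have expand : ∑ i, g i ^ 2 = ∑ i, gs i ^ 2 + 2 * ∑ i, gs i * h i + ∑ i, h i ^ 2 := by
    rw [Finset.mul_sum, ← Finset.sum_add_distrib, ← Finset.sum_add_distrib]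
    apply Finset.sum_congr rfl
    intro i _
    have : g i = gs i + h i := by rw [hh]; ring
    rw [this]; ring
  have hlt : ∑ i, gs i ^ 2 < ∑ i, g i ^ 2 := by rw [expand]; linarith
  have : ∑ i, (((1 - lam) • d + (lam * ((∑ j, d j) / n)) • (fun _ => (1 : ℝ)) : Fin n → ℝ) i) ^ 2
      = ∑ i, gs i ^ 2 := rfl
  rw [this]
  linarith
end

section
/- Let n ≥ 1, let u, w, u′, w′, γ ∈ ℝⁿ, B ∈ ℝ^{n×n}, and λ* > 0, and define the n×n matrix Q := u (w′)ᵀ − w (u′)ᵀ (difference of outer products, with u(w′)ᵀ having entries uᵢ w′ⱼ). For ε ≥ 0 put d(ε) := e₁ + εγ. Assume there is ε₁ > 0 such that for all ε ∈ [0, ε₁]: ⟨u, d(ε)⟩ > 0, ⟨w, d(ε)⟩ > 0, ⟨u′, B d(ε)⟩ ≥ 0, and ⟨w′, B d(ε)⟩ ≥ 0. Then the following are equivalent: (I) there exists ε₀ ∈ (0, ε₁] such that |⟨u′, B d(ε)⟩| / (λ* ⟨u, d(ε)⟩) = |⟨w′, B d(ε)⟩| / (λ* ⟨w, d(ε)⟩)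 for every ε ∈ [0, ε₀]; (II) e₁ᵀ Q B e₁ = 0, e₁ᵀ (QB + Bᵀ Qᵀ) γ = 0, and γᵀ Q B γ = 0. -/
open Matrix

/-- Lemma `conditions`. With `Q = u(w′)ᵀ − w(u′)ᵀ`, `d(ε) = e₁ + εγ`, and
positivity/nonnegativity of the relevant flows on `[0, ε₁]`, the two relative exceedances
`|⟨u′, B d(ε)⟩|/(λ* ⟨u, d(ε)⟩)` and `|⟨w′, B d(ε)⟩|/(λ* ⟨w, d(ε)⟩)` agree on a right
neighborhood of `0` iff `e₁ᵀQBe₁ = 0`, `e₁ᵀ(QB + BᵀQᵀ)γ = 0`, and `γᵀQBγ = 0`. -/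
theorem equal_exceedance_conditions (n : ℕ) (hn : 0 < n)
    (u w u' w' γ : Fin n → ℝ) (B : Matrix (Fin n) (Fin n) ℝ)
    (lams : ℝ) (hlams : 0 < lams)
    (Q : Matrix (Fin n) (Fin n) ℝ)
    (hQ : Q = Matrix.of fun i j => u i * w' j - w i * u' j)
    (ε₁ : ℝ) (hε₁ : 0 < ε₁)
    (hpos : ∀ ε ∈ Set.Icc (0 : ℝ) ε₁,
      0 < u ⬝ᵥ ((Pi.single (⟨0, hn⟩ : Fin n) 1 : Fin n → ℝ) + ε • γ) ∧
      0 < w ⬝ᵥ ((Pi.single (⟨0, hn⟩ : Fin n) 1 : Fin n → ℝ) + ε • γ) ∧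
      0 ≤ u' ⬝ᵥ B.mulVec ((Pi.single (⟨0, hn⟩ : Fin n) 1 : Fin n → ℝ) + ε • γ) ∧
      0 ≤ w' ⬝ᵥ B.mulVec ((Pi.single (⟨0, hn⟩ : Fin n) 1 : Fin n → ℝ) + ε • γ)) :
    (∃ ε₀ ∈ Set.Ioc (0 : ℝ) ε₁, ∀ ε ∈ Set.Icc (0 : ℝ) ε₀,
        |u' ⬝ᵥ B.mulVec ((Pi.single (⟨0, hn⟩ : Fin n) 1 : Fin n → ℝ) + ε • γ)| /
            (lams * (u ⬝ᵥ ((Pi.single (⟨0, hn⟩ : Fin n) 1 : Fin n → ℝ) + ε • γ)))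
          = |w' ⬝ᵥ B.mulVec ((Pi.single (⟨0, hn⟩ : Fin n) 1 : Fin n → ℝ) + ε • γ)| /
            (lams * (w ⬝ᵥ ((Pi.single (⟨0, hn⟩ : Fin n) 1 : Fin n → ℝ) + ε • γ)))) ↔
    ((Pi.single (⟨0, hn⟩ : Fin n) 1 : Fin n → ℝ) ⬝ᵥ
        (Q * B).mulVec (Pi.single (⟨0, hn⟩ : Fin n) 1) = 0 ∧
      (Pi.single (⟨0, hn⟩ : Fin n) 1 : Fin n → ℝ) ⬝ᵥ (Q * B + Bᵀ * Qᵀ).mulVec γ = 0 ∧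
      γ ⬝ᵥ (Q * B).mulVec γ = 0) := by
  set e : Fin n → ℝ := Pi.single (⟨0, hn⟩ : Fin n) 1 with he
  -- bilinear formula for Q*B
  have key : ∀ x y : Fin n → ℝ, x ⬝ᵥ (Q * B).mulVec y
      = (u ⬝ᵥ x) * (w' ⬝ᵥ B.mulVec y) - (w ⬝ᵥ x) * (u' ⬝ᵥ B.mulVec y) := by
    intro x y
    rw [← Matrix.mulVec_mulVec, hQ]
    set z := B.mulVec y with hz
    simp only [Matrix.mulVec, dotProduct, Matrix.of_apply, sub_mul, mul_sub,
      Finset.sum_sub_distrib, Finset.mul_sum, Finset.sum_mul]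
    congr 1 <;>
      · rw [Finset.sum_comm]
        exact Finset.sum_congr rfl fun i _ => Finset.sum_congr rfl fun j _ => by ring
  have keyT : ∀ x y : Fin n → ℝ, x ⬝ᵥ (Bᵀ * Qᵀ).mulVec y = y ⬝ᵥ (Q * B).mulVec x := by
    intro x y
    rw [← Matrix.transpose_mul, Matrix.dotProduct_mulVec, Matrix.vecMul_transpose,
      dotProduct_comm]
  set A0 : ℝ := u' ⬝ᵥ B.mulVec e with hA0
  set A1 : ℝ := u' ⬝ᵥ B.mulVec γ with hA1
  set Bb0 : ℝ := w' ⬝ᵥ B.mulVec e with hB0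
  set Bb1 : ℝ := w' ⬝ᵥ B.mulVec γ with hB1
  set p0 : ℝ := u ⬝ᵥ e with hp0
  set p1 : ℝ := u ⬝ᵥ γ with hp1
  set q0 : ℝ := w ⬝ᵥ e with hq0
  set q1 : ℝ := w ⬝ᵥ γ with hq1
  have lin : ∀ ε : ℝ,
      u ⬝ᵥ (e + ε • γ) = p0 + ε * p1 ∧ w ⬝ᵥ (e + ε • γ) = q0 + ε * q1 ∧
      u' ⬝ᵥ B.mulVec (e + ε • γ) = A0 + ε * A1 ∧
      w' ⬝ᵥ B.mulVec (e + ε • γ) = Bb0 + ε * Bb1 := by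
    intro ε
    refine ⟨?_, ?_, ?_, ?_⟩ <;>
      simp [Matrix.mulVec_add, Matrix.mulVec_smul, dotProduct_add, dotProduct_smul,
        smul_eq_mul, hA0, hA1, hB0, hB1, hp0, hp1, hq0, hq1, mul_comm]
  set C0 : ℝ := p0 * Bb0 - q0 * A0 with hC0
  set C1 : ℝ := p0 * Bb1 + p1 * Bb0 - q0 * A1 - q1 * A0 with hC1
  set C2 : ℝ := p1 * Bb1 - q1 * A1 with hC2
  -- translate RHS
  have hRHS : (e ⬝ᵥ (Q * B).mulVec e = 0 ∧ e ⬝ᵥ (Q * B + Bᵀ * Qᵀ).mulVec γ = 0 ∧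
      γ ⬝ᵥ (Q * B).mulVec γ = 0) ↔ (C0 = 0 ∧ C1 = 0 ∧ C2 = 0) := by
    rw [Matrix.add_mulVec, dotProduct_add, keyT, key, key, key, key]
    constructor
    · rintro ⟨h1, h2, h3⟩
      refine ⟨by linear_combination h1, by linear_combination h2, by linear_combination h3⟩
    · rintro ⟨h1, h2, h3⟩
      refine ⟨by linear_combination h1, by linear_combination h2, by linear_combination h3⟩
  rw [hRHS]
  -- ratio equality ↔ quadratic = 0, for ε ∈ [0, ε₁]
  have ratio : ∀ ε ∈ Set.Icc (0 : ℝ) ε₁,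
      (|u' ⬝ᵥ B.mulVec (e + ε • γ)| / (lams * (u ⬝ᵥ (e + ε • γ)))
        = |w' ⬝ᵥ B.mulVec (e + ε • γ)| / (lams * (w ⬝ᵥ (e + ε • γ))))
      ↔ C0 + C1 * ε + C2 * ε ^ 2 = 0 := by
    intro ε hε
    obtain ⟨hu, hw, hu', hw'⟩ := hpos ε hε
    obtain ⟨l1, l2, l3, l4⟩ := lin ε
    rw [abs_of_nonneg hu', abs_of_nonneg hw',
      div_eq_div_iff (by positivity) (by positivity)]
    rw [l1, l2, l3, l4] at *
    constructor
    · intro h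
      have h' : (A0 + ε * A1) * (q0 + ε * q1) = (Bb0 + ε * Bb1) * (p0 + ε * p1) :=
        mul_left_cancel₀ (ne_of_gt hlams) (by linear_combination h)
      linear_combination -h'
    · intro h
      linear_combination -lams * h
  constructor
  · rintro ⟨ε₀, hε₀, hall⟩
    have hmem : ∀ ε ∈ Set.Icc (0 : ℝ) ε₀, ε ∈ Set.Icc (0 : ℝ) ε₁ :=
      fun ε hε => ⟨hε.1, hε.2.trans hε₀.2⟩
    have hq : ∀ ε ∈ Set.Icc (0 : ℝ) ε₀, C0 + C1 * ε + C2 * ε ^ 2 = 0 := by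
      intro ε hε
      exact (ratio ε (hmem ε hε)).mp (hall ε hε)
    have h0 : C0 = 0 := by
      have := hq 0 ⟨le_refl 0, le_of_lt hε₀.1⟩
      linarith [this]
    have h1 : C1 * ε₀ + C2 * ε₀ ^ 2 = 0 := by
      have := hq ε₀ ⟨le_of_lt hε₀.1, le_refl _⟩
      linarith [this]
    have h2 : C1 * (ε₀ / 2) + C2 * (ε₀ / 2) ^ 2 = 0 := by
      have := hq (ε₀ / 2) ⟨by linarith [hε₀.1], by linarith [hε₀.1]⟩
      linarith [this]
    have hne : ε₀ ≠ 0 := ne_of_gt hε₀.1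
    have hc2 : C2 = 0 := by
      have h3 : C2 * ε₀ ^ 2 = 0 := by linear_combination 2 * h1 - 4 * h2
      have := mul_eq_zero.mp h3
      rcases this with h | h
      · exact h
      · exact absurd h (pow_ne_zero 2 hne)
    have hc1 : C1 = 0 := by
      have h3 : C1 * ε₀ = 0 := by linear_combination h1 - ε₀ ^ 2 * hc2
      rcases mul_eq_zero.mp h3 with h | h
      · exact h
      · exact absurd h hne
    exact ⟨h0, hc1, hc2⟩
  · rintro ⟨h0, h1, h2⟩
    refine ⟨ε₁, ⟨hε₁, le_refl _⟩, fun ε hε => ?_⟩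
    rw [ratio ε hε, h0, h1, h2]
    ring
end

section
/- Let n ≥ 1, let u, w, u′, w′, γ ∈ ℝⁿ, B ∈ ℝ^{n×n}, and λ* > 0, and define Q := u (w′)ᵀ − w (u′)ᵀ (difference of outer products). For ε ≥ 0 put d(ε) := e₁ + εγ, and assume there is ε₁ > 0 such that ⟨u, d(ε)⟩ > 0 and ⟨w, d(ε)⟩ > 0 for all ε ∈ [0, ε₁]. If the matrix Q·B is skew-symmetric, i.e. (QB)ᵀ = −QB, then for every ε ∈ [0, ε₁], |⟨u′, B d(ε)⟩| / (λ* ⟨u, d(ε)⟩) = |⟨w′, B d(ε)⟩| / (λ* ⟨w, d(ε)⟩). -/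
open Matrix

lemma outer_mulVec_dot {n : ℕ} (u w u' w' d v : Fin n → ℝ) :
    d ⬝ᵥ (Matrix.of fun i j => u i * w' j - w i * u' j).mulVec v
      = (u ⬝ᵥ d) * (w' ⬝ᵥ v) - (w ⬝ᵥ d) * (u' ⬝ᵥ v) := by
  simp only [Matrix.mulVec, dotProduct, Matrix.of_apply, sub_mul, mul_sub,
    Finset.sum_sub_distrib, Finset.mul_sum, Finset.sum_mul]
  congr 1 <;> rw [Finset.sum_comm] <;> apply Finset.sum_congr rfl <;> intros <;>
    apply Finset.sum_congr rfl <;> intros <;> ring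

/-- Corollary `skew-symmetricCond`. With `Q = u(w′)ᵀ − w(u′)ᵀ` and
`d(ε) = e₁ + εγ`, if `⟨u, d(ε)⟩ > 0` and `⟨w, d(ε)⟩ > 0` on `[0, ε₁]` and `QB` is
skew-symmetric, then the relative exceedances
`|⟨u′, B d(ε)⟩|/(λ* ⟨u, d(ε)⟩)` and `|⟨w′, B d(ε)⟩|/(λ* ⟨w, d(ε)⟩)` agree on `[0, ε₁]`. -/
theorem skew_symmetric_equal_exceedance (n : ℕ) (hn : 0 < n)
    (u w u' w' γ : Fin n → ℝ) (B : Matrix (Fin n) (Fin n) ℝ)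
    (lams : ℝ) (hlams : 0 < lams)
    (Q : Matrix (Fin n) (Fin n) ℝ)
    (hQ : Q = Matrix.of fun i j => u i * w' j - w i * u' j)
    (ε₁ : ℝ) (hε₁ : 0 < ε₁)
    (hpos : ∀ ε ∈ Set.Icc (0 : ℝ) ε₁,
      0 < u ⬝ᵥ ((Pi.single (⟨0, hn⟩ : Fin n) 1 : Fin n → ℝ) + ε • γ) ∧
      0 < w ⬝ᵥ ((Pi.single (⟨0, hn⟩ : Fin n) 1 : Fin n → ℝ) + ε • γ))
    (hskew : (Q * B)ᵀ = -(Q * B)) :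
    ∀ ε ∈ Set.Icc (0 : ℝ) ε₁,
      |u' ⬝ᵥ B.mulVec ((Pi.single (⟨0, hn⟩ : Fin n) 1 : Fin n → ℝ) + ε • γ)| /
          (lams * (u ⬝ᵥ ((Pi.single (⟨0, hn⟩ : Fin n) 1 : Fin n → ℝ) + ε • γ)))
        = |w' ⬝ᵥ B.mulVec ((Pi.single (⟨0, hn⟩ : Fin n) 1 : Fin n → ℝ) + ε • γ)| /
          (lams * (w ⬝ᵥ ((Pi.single (⟨0, hn⟩ : Fin n) 1 : Fin n → ℝ) + ε • γ))) := by
  intro ε hε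
  set d : Fin n → ℝ := (Pi.single (⟨0, hn⟩ : Fin n) 1 : Fin n → ℝ) + ε • γ with hd
  obtain ⟨hu, hw⟩ := hpos ε hε
  -- the quadratic form of Q*B vanishes
  have hzero : d ⬝ᵥ (Q * B).mulVec d = 0 := by
    have h1 : d ⬝ᵥ (Q * B).mulVec d = d ⬝ᵥ (Q * B)ᵀ.mulVec d := by
      rw [Matrix.dotProduct_mulVec, Matrix.mulVec_transpose, dotProduct_comm]
    rw [hskew, Matrix.neg_mulVec, dotProduct_neg] at h1
    linarith
  have hQB : (Q * B).mulVec d = Q.mulVec (B.mulVec d) := by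
    rw [← Matrix.mulVec_mulVec]
  rw [hQB, hQ, outer_mulVec_dot, sub_eq_zero] at hzero
  -- now hzero : (u ⬝ᵥ d) * (w' ⬝ᵥ B.mulVec d) = (w ⬝ᵥ d) * (u' ⬝ᵥ B.mulVec d)
  set a := u' ⬝ᵥ B.mulVec d
  set b := w' ⬝ᵥ B.mulVec d
  set p := u ⬝ᵥ d
  set q := w ⬝ᵥ d
  have habs : |a| * q = |b| * p := by
    have h1 : |a * q| = |b * p| := by
      rw [mul_comm a q, mul_comm b p, hzero]
    rwa [abs_mul, abs_mul, abs_of_pos hu, abs_of_pos hw] at h1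
  rw [div_eq_div_iff (by positivity) (by positivity)]
  calc |a| * (lams * q) = lams * (|a| * q) := by ring
    _ = lams * (|b| * p) := by rw [habs]
    _ = |b| * (lams * p) := by ring
end

section
/- Let n ≥ 1 and let X₁, …, Xₙ be independent, identically distributed, nonnegative real random variables. Let ε ∈ (0,1) and x ≥ 0, and set M := max{X₁, …, Xₙ}. Then P( M > x and (Σᵢ₌₁ⁿ Xᵢ) − M ≤ ε·M ) = n · P( X₁ > x and Σⱼ₌₂ⁿ Xⱼ ≤ ε·X₁ ). -/
open MeasureTheory ProbabilityTheory Finset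

/-- combinatorial identity from the proof of Lemma `asymptoticS`. For i.i.d.
nonnegative random variables `X₁,…,Xₙ`, `ε ∈ (0,1)` and `x ≥ 0`, with `M` the maximum,
`P(M > x, ΣXᵢ − M ≤ εM) = n · P(X₁ > x, Σⱼ₌₂ⁿ Xⱼ ≤ εX₁)`. -/
theorem single_big_jump_identity {Ω : Type*} [MeasurableSpace Ω]
    (μ : Measure Ω) [IsProbabilityMeasure μ]
    (n : ℕ) (hn : 0 < n) (X : Fin n → Ω → ℝ)
    (hmeas : ∀ i, Measurable (X i))
    (hindep : iIndepFun X μ)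
    (hident : ∀ i, Measure.map (X i) μ = Measure.map (X ⟨0, hn⟩) μ)
    (hnonneg : ∀ i ω, 0 ≤ X i ω)
    (ε x : ℝ) (hε : ε ∈ Set.Ioo (0 : ℝ) 1) (hx : 0 ≤ x) :
    μ {ω | x < Finset.univ.sup' ⟨⟨0, hn⟩, Finset.mem_univ _⟩ (fun i => X i ω) ∧
        (∑ i, X i ω) - Finset.univ.sup' ⟨⟨0, hn⟩, Finset.mem_univ _⟩ (fun i => X i ω)
          ≤ ε * Finset.univ.sup' ⟨⟨0, hn⟩, Finset.mem_univ _⟩ (fun i => X i ω)}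
      = (n : ENNReal) *
        μ {ω | x < X ⟨0, hn⟩ ω ∧
          ∑ i ∈ Finset.univ.erase (⟨0, hn⟩ : Fin n), X i ω ≤ ε * X ⟨0, hn⟩ ω} := by
  classical
  obtain ⟨hε0, hε1⟩ := hε
  set i0 : Fin n := ⟨0, hn⟩ with hi0
  set A : Fin n → Set Ω :=
    fun i => {ω | x < X i ω ∧ ∑ j ∈ Finset.univ.erase i, X j ω ≤ ε * X i ω} with hA
  have hmeasA : ∀ i, MeasurableSet (A i) :=
    fun i => (measurableSet_lt measurable_const (hmeas i)).inter
      (measurableSet_le (Finset.measurable_sum _ fun j _ => hmeas j)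
        (measurable_const.mul (hmeas i)))
  -- in `A i`, index `i` strictly dominates all others
  have hkey : ∀ i ω, ω ∈ A i → ∀ j, j ≠ i → X j ω < X i ω := by
    rintro i ω ⟨h1, h2⟩ j hj
    have hXi : 0 < X i ω := lt_of_le_of_lt hx h1
    calc X j ω ≤ ∑ k ∈ Finset.univ.erase i, X k ω :=
          Finset.single_le_sum (fun k _ => hnonneg k ω)
            (Finset.mem_erase.2 ⟨hj, Finset.mem_univ _⟩)
      _ ≤ ε * X i ω := h2
      _ < 1 * X i ω := mul_lt_mul_of_pos_right hε1 hXi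
      _ = X i ω := one_mul _
  have hdisj : Pairwise (Function.onFun Disjoint A) := by
    intro i j hij
    rw [Function.onFun, Set.disjoint_left]
    intro ω hi hj
    exact lt_asymm (hkey i ω hi j (Ne.symm hij)) (hkey j ω hj i hij)
  -- inside `A i` the sup is `X i`
  have hsupA : ∀ i ω, ω ∈ A i →
      Finset.univ.sup' ⟨i0, Finset.mem_univ _⟩ (fun j => X j ω) = X i ω := by
    intro i ω hω
    refine le_antisymm (Finset.sup'_le _ _ fun j _ => ?_)
      (Finset.le_sup' (fun j => X j ω) (Finset.mem_univ i))
    rcases eq_or_ne j i with rfl | hji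
    · exact le_rfl
    · exact (hkey i ω hω j hji).le
  -- the event is the disjoint union of the `A i`
  have hE : {ω | x < Finset.univ.sup' ⟨i0, Finset.mem_univ _⟩ (fun i => X i ω) ∧
        (∑ i, X i ω) - Finset.univ.sup' ⟨i0, Finset.mem_univ _⟩ (fun i => X i ω)
          ≤ ε * Finset.univ.sup' ⟨i0, Finset.mem_univ _⟩ (fun i => X i ω)} = ⋃ i, A i := by
    ext ω
    simp only [Set.mem_setOf_eq, Set.mem_iUnion]
    constructor
    · rintro ⟨h1, h2⟩
      obtain ⟨i, -, hi⟩ :=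
        Finset.exists_mem_eq_sup' (⟨i0, Finset.mem_univ _⟩ : Finset.Nonempty Finset.univ)
          (fun j => X j ω)
      rw [hi] at h1 h2
      refine ⟨i, h1, ?_⟩
      rwa [Finset.sum_erase_eq_sub (Finset.mem_univ i)]
    · rintro ⟨i, hi⟩
      have hs := hsupA i ω hi
      rw [hs]
      refine ⟨hi.1, ?_⟩
      rw [← Finset.sum_erase_eq_sub (Finset.mem_univ i)]
      exact hi.2
  -- product-measure representation
  set T : Ω → (Fin n → ℝ) := fun ω i => X i ω with hT
  have hTmeas : Measurable T := measurable_pi_lambda _ hmeas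
  set m : Measure ℝ := μ.map (X i0) with hm
  have : IsProbabilityMeasure m := Measure.isProbabilityMeasure_map (hmeas i0).aemeasurable
  have hpi : μ.map T = Measure.pi (fun _ : Fin n => m) := by
    refine (Measure.pi_eq fun s hs => ?_).symm
    rw [Measure.map_apply hTmeas (MeasurableSet.univ_pi hs)]
    have hpre : T ⁻¹' (Set.univ.pi s) = ⋂ i ∈ Finset.univ, X i ⁻¹' s i := by
      ext ω; simp [Set.mem_pi, hT]
    rw [hpre, hindep.measure_inter_preimage_eq_mul Finset.univ (fun i _ => hs i)]
    refine Finset.prod_congr rfl fun i _ => ?_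
    rw [← Measure.map_apply (hmeas i) (hs i), hident i, hm]
  set B : Fin n → Set (Fin n → ℝ) :=
    fun i => {f | x < f i ∧ ∑ j ∈ Finset.univ.erase i, f j ≤ ε * f i} with hB
  have hmeasB : ∀ i, MeasurableSet (B i) :=
    fun i => (measurableSet_lt measurable_const (measurable_pi_apply i)).inter
      (measurableSet_le (Finset.measurable_sum _ fun j _ => measurable_pi_apply j)
        (measurable_const.mul (measurable_pi_apply i)))
  have hAB : ∀ i, A i = T ⁻¹' (B i) := fun i => rfl
  -- exchangeability: all `A i` have the same measure
  have hAeq : ∀ i, μ (A i) = μ (A i0) := by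
    intro i
    have h1 : ∀ j, μ (A j) = Measure.pi (fun _ : Fin n => m) (B j) := by
      intro j
      rw [hAB, ← Measure.map_apply hTmeas (hmeasB j), hpi]
    rw [h1 i, h1 i0]
    set e : Fin n ≃ Fin n := Equiv.swap i0 i with he
    have hmp := measurePreserving_piCongrLeft (fun _ : Fin n => m) e
    have hpreB : (MeasurableEquiv.piCongrLeft (fun _ : Fin n => ℝ) e) ⁻¹' (B i0) = B i := by
      ext f
      have hfj : ∀ j, (Equiv.piCongrLeft (fun _ => ℝ) e) f j = f (e.symm j) := by
        intro j; simp [Equiv.piCongrLeft_apply]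
      simp only [Set.mem_preimage, hB, Set.mem_setOf_eq, MeasurableEquiv.coe_piCongrLeft]
      have h0 : (Equiv.piCongrLeft (fun _ => ℝ) e) f i0 = f i := by
        rw [hfj, he, Equiv.symm_swap, Equiv.swap_apply_left]
      have hsum : ∑ j ∈ Finset.univ.erase i0, (Equiv.piCongrLeft (fun _ => ℝ) e) f j
          = ∑ j ∈ Finset.univ.erase i, f j := by
        rw [Finset.sum_erase_eq_sub (Finset.mem_univ i0),
          Finset.sum_erase_eq_sub (Finset.mem_univ i), h0]
        congr 1
        rw [Finset.sum_congr rfl fun j _ => hfj j]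
        exact Equiv.sum_comp e.symm f
      rw [h0, hsum]
    calc Measure.pi (fun _ : Fin n => m) (B i)
        = Measure.pi (fun _ : Fin n => m)
            ((MeasurableEquiv.piCongrLeft (fun _ : Fin n => ℝ) e) ⁻¹' (B i0)) := by rw [hpreB]
      _ = Measure.pi (fun _ : Fin n => m) (B i0) :=
          hmp.measure_preimage (hmeasB i0).nullMeasurableSet
  -- put everything together
  rw [hE, measure_iUnion hdisj hmeasA, tsum_fintype]
  rw [Finset.sum_congr rfl fun i _ => hAeq i, Finset.sum_const, Finset.card_univ,
    Fintype.card_fin, nsmul_eq_mul]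
end

section
/- Let n ≥ 2. Let X₁ be a nonnegative real random variable with P(X₁ > x) > 0 for every x ∈ ℝ, and let (X₂, …, Xₙ) be a random vector with nonnegative real (hence almost surely finite) coordinates that is independent of X₁. Let ε > 0 and let A ⊆ ℝ^{n−1} be a Borel set. Then lim_{x→∞} P( X₁ > x, Σⱼ₌₂ⁿ Xⱼ ≤ ε·X₁, (X₂, …, Xₙ) ∈ A ) / P( X₁ > x ) = P( (X₂, …, Xₙ) ∈ A ). -/
open MeasureTheory ProbabilityTheory Filter
open scoped ENNReal

/-- analytic core of Lemma `asymptoticS`. Let `X₁ ≥ 0` have an everywhere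
positive tail, and let the nonnegative random vector `(X₂,…,Xₙ) ∈ ℝ^{n−1}` (here `Y` with values
in `ℝ^k`, `k = n−1 ≥ 1`) be independent of `X₁`. Then for every `ε > 0` and Borel `A`,
`P(X₁ > x, Σⱼ Yⱼ ≤ εX₁, Y ∈ A) / P(X₁ > x) → P(Y ∈ A)` as `x → ∞`. -/
theorem asymptotic_independence {Ω : Type*} [MeasurableSpace Ω]
    (μ : Measure Ω) [IsProbabilityMeasure μ]
    (k : ℕ) (hk : 0 < k)
    (X : Ω → ℝ) (Y : Ω → Fin k → ℝ)
    (hX : Measurable X) (hY : Measurable Y)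
    (hXnn : ∀ ω, 0 ≤ X ω) (hYnn : ∀ ω i, 0 ≤ Y ω i)
    (htail : ∀ x : ℝ, 0 < μ {ω | x < X ω})
    (hindep : IndepFun X Y μ)
    (ε : ℝ) (hε : 0 < ε)
    (A : Set (Fin k → ℝ)) (hA : MeasurableSet A) :
    Tendsto (fun x : ℝ =>
        μ {ω | x < X ω ∧ (∑ i, Y ω i) ≤ ε * X ω ∧ Y ω ∈ A} / μ {ω | x < X ω})
      atTop (nhds (μ {ω | Y ω ∈ A})) := by
  have hsum : Measurable fun y : Fin k → ℝ => ∑ i, y i :=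
    Finset.measurable_sum _ fun i _ => measurable_pi_apply i
  set T : ℝ → ℝ≥0∞ := fun x => μ {ω | x < X ω} with hT
  have hTne : ∀ x, T x ≠ 0 := fun x => (htail x).ne'
  have hTtop : ∀ x, T x ≠ ⊤ := fun x => measure_ne_top μ _
  set s : ℝ → Set (Fin k → ℝ) := fun x => {y | ∑ i, y i ≤ ε * x} ∩ A with hs
  set g : ℝ → ℝ≥0∞ := fun x => μ (Y ⁻¹' s x) with hg
  set h : ℝ → ℝ≥0∞ := fun x => μ (Y ⁻¹' {y | ε * x < ∑ i, y i}) with hh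
  have hsmeas : ∀ x, MeasurableSet (s x) := fun x =>
    ((measurableSet_le hsum measurable_const)).inter hA
  -- g tends to μ (Y ⁻¹' A)
  have hgt : Tendsto g atTop (nhds (μ {ω | Y ω ∈ A})) := by
    have hmono : Monotone fun x => Y ⁻¹' s x := by
      intro a b hab y hy
      exact ⟨le_trans hy.1 (mul_le_mul_of_nonneg_left hab hε.le), hy.2⟩
    have hU : (⋃ x : ℝ, Y ⁻¹' s x) = Y ⁻¹' A := by
      ext ω
      simp only [Set.mem_iUnion, Set.mem_preimage, hs, Set.mem_inter_iff, Set.mem_setOf_eq]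
      constructor
      · rintro ⟨x, _, hx⟩; exact hx
      · intro hx
        refine ⟨(∑ i, Y ω i) / ε, ?_, hx⟩
        rw [mul_div_cancel₀ _ hε.ne']
    have := tendsto_measure_iUnion_atTop (μ := μ) hmono
    rw [hU] at this
    exact this
  -- h tends to 0
  have hht : Tendsto h atTop (nhds 0) := by
    have hanti : Antitone fun x => Y ⁻¹' {y | ε * x < ∑ i, y i} := by
      intro a b hab ω hω
      exact lt_of_le_of_lt (mul_le_mul_of_nonneg_left hab hε.le) hω
    have hI : (⋂ x : ℝ, Y ⁻¹' {y | ε * x < ∑ i, y i}) = ∅ := by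
      ext ω
      simp only [Set.mem_iInter, Set.mem_preimage, Set.mem_setOf_eq, Set.mem_empty_iff_false,
        iff_false, not_forall, not_lt]
      refine ⟨(∑ i, Y ω i) / ε, ?_⟩
      rw [mul_div_cancel₀ _ hε.ne']
    have := tendsto_measure_iInter_atTop (μ := μ)
      (fun x => (hY (measurableSet_lt measurable_const hsum)).nullMeasurableSet)
      hanti ⟨0, measure_ne_top μ _⟩
    rw [hI] at this
    rw [measure_empty] at this
    exact this
  -- squeeze
  have hlow : ∀ x : ℝ, g x ≤
      μ {ω | x < X ω ∧ (∑ i, Y ω i) ≤ ε * X ω ∧ Y ω ∈ A} / T x := by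
    intro x
    have hprod : μ (X ⁻¹' Set.Ioi x ∩ Y ⁻¹' s x) = T x * g x := by
      rw [hindep.measure_inter_preimage_eq_mul _ _ measurableSet_Ioi (hsmeas x)]
      rfl
    have hsub : X ⁻¹' Set.Ioi x ∩ Y ⁻¹' s x ⊆
        {ω | x < X ω ∧ (∑ i, Y ω i) ≤ ε * X ω ∧ Y ω ∈ A} := by
      rintro ω ⟨h1, h2, h3⟩
      exact ⟨h1, le_trans h2 (mul_le_mul_of_nonneg_left (le_of_lt h1) hε.le), h3⟩
    calc g x = T x * g x / T x := by
          rw [mul_comm, mul_div_assoc, ENNReal.div_self (hTne x) (hTtop x), mul_one]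
      _ = μ (X ⁻¹' Set.Ioi x ∩ Y ⁻¹' s x) / T x := by rw [hprod]
      _ ≤ _ := ENNReal.div_le_div_right (measure_mono hsub) _
  have hhigh : ∀ x : ℝ,
      μ {ω | x < X ω ∧ (∑ i, Y ω i) ≤ ε * X ω ∧ Y ω ∈ A} / T x ≤ g x + h x := by
    intro x
    have hsub : {ω | x < X ω ∧ (∑ i, Y ω i) ≤ ε * X ω ∧ Y ω ∈ A} ⊆
        (X ⁻¹' Set.Ioi x ∩ Y ⁻¹' s x) ∪
        (X ⁻¹' Set.Ioi x ∩ Y ⁻¹' {y | ε * x < ∑ i, y i}) := by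
      rintro ω ⟨h1, h2, h3⟩
      by_cases hc : (∑ i, Y ω i) ≤ ε * x
      · exact Or.inl ⟨h1, hc, h3⟩
      · exact Or.inr ⟨h1, not_le.mp hc⟩
    have hb : μ {ω | x < X ω ∧ (∑ i, Y ω i) ≤ ε * X ω ∧ Y ω ∈ A} ≤ T x * (g x + h x) := by
      calc μ {ω | x < X ω ∧ (∑ i, Y ω i) ≤ ε * X ω ∧ Y ω ∈ A}
          ≤ μ ((X ⁻¹' Set.Ioi x ∩ Y ⁻¹' s x) ∪
              (X ⁻¹' Set.Ioi x ∩ Y ⁻¹' {y | ε * x < ∑ i, y i})) := measure_mono hsub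
        _ ≤ μ (X ⁻¹' Set.Ioi x ∩ Y ⁻¹' s x) +
              μ (X ⁻¹' Set.Ioi x ∩ Y ⁻¹' {y | ε * x < ∑ i, y i}) := measure_union_le _ _
        _ = T x * g x + T x * h x := by
            rw [hindep.measure_inter_preimage_eq_mul _ _ measurableSet_Ioi (hsmeas x),
              hindep.measure_inter_preimage_eq_mul _ _ measurableSet_Ioi
                (measurableSet_lt measurable_const hsum)]
            rfl
        _ = T x * (g x + h x) := (mul_add _ _ _).symm
    calc μ {ω | x < X ω ∧ (∑ i, Y ω i) ≤ ε * X ω ∧ Y ω ∈ A} / T x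
        ≤ T x * (g x + h x) / T x := ENNReal.div_le_div_right hb _
      _ = g x + h x := by
          rw [mul_comm, mul_div_assoc, ENNReal.div_self (hTne x) (hTtop x), mul_one]
  have hght : Tendsto (fun x => g x + h x) atTop (nhds (μ {ω | Y ω ∈ A})) := by
    simpa using hgt.add hht
  exact tendsto_of_tendsto_of_tendsto_of_le_of_le hgt hght hlow hhigh
end

section
/- Let n ≥ 1 and let X₁, …, Xₙ be independent, identically distributed, nonnegative real random variables with P(X₁ > x) > 0 for every x ∈ ℝ. Let ε ∈ (0,1) and set M := max{X₁, …, Xₙ}. Then lim_{x→∞} P( M > x and (Σᵢ₌₁ⁿ Xᵢ) − M ≤ ε·M ) / P( X₁ > x ) = n. -/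
open MeasureTheory ProbabilityTheory Finset Filter

/-- single-big-jump asymptotics underlying Lemma `asymptoticS`. For i.i.d.
nonnegative random variables `X₁,…,Xₙ` with everywhere positive tails and `ε ∈ (0,1)`, with `M`
the maximum, `P(M > x, ΣXᵢ − M ≤ εM) / P(X₁ > x) → n` as `x → ∞`. -/
theorem single_big_jump_limit {Ω : Type*} [MeasurableSpace Ω]
    (μ : Measure Ω) [IsProbabilityMeasure μ]
    (n : ℕ) (hn : 0 < n) (X : Fin n → Ω → ℝ)
    (hmeas : ∀ i, Measurable (X i))
    (hindep : iIndepFun X μ)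
    (hident : ∀ i, Measure.map (X i) μ = Measure.map (X ⟨0, hn⟩) μ)
    (hnonneg : ∀ i ω, 0 ≤ X i ω)
    (htail : ∀ x : ℝ, 0 < μ {ω | x < X ⟨0, hn⟩ ω})
    (ε : ℝ) (hε : ε ∈ Set.Ioo (0 : ℝ) 1) :
    Tendsto (fun x : ℝ =>
        μ {ω | x < Finset.univ.sup' ⟨⟨0, hn⟩, Finset.mem_univ _⟩ (fun i => X i ω) ∧
            (∑ i, X i ω) - Finset.univ.sup' ⟨⟨0, hn⟩, Finset.mem_univ _⟩ (fun i => X i ω)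
              ≤ ε * Finset.univ.sup' ⟨⟨0, hn⟩, Finset.mem_univ _⟩ (fun i => X i ω)}
          / μ {ω | x < X ⟨0, hn⟩ ω})
      atTop (nhds (n : ENNReal)) := by
  classical
  obtain ⟨hε0, hε1⟩ := hε
  set i0 : Fin n := ⟨0, hn⟩ with hi0
  set M : Ω → ℝ := fun ω => Finset.univ.sup' ⟨i0, Finset.mem_univ _⟩ (fun i => X i ω) with hM
  set T : ℝ → ENNReal := fun x => μ {ω | x < X i0 ω} with hT
  -- basic facts about T
  have hT_ne0 : ∀ x, T x ≠ 0 := fun x => (htail x).ne'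
  have hT_netop : ∀ x, T x ≠ ⊤ := fun x => (measure_lt_top μ _).ne
  have hXi_tail : ∀ i x, μ {ω | x < X i ω} = T x := by
    intro i x
    show μ (X i ⁻¹' Set.Ioi x) = μ (X i0 ⁻¹' Set.Ioi x)
    rw [← Measure.map_apply (hmeas i) measurableSet_Ioi,
      ← Measure.map_apply (hmeas i0) measurableSet_Ioi, hident i]
  -- M dominates each X i
  have hle_M : ∀ i ω, X i ω ≤ M ω := fun i ω =>
    Finset.le_sup' (fun i => X i ω) (Finset.mem_univ i)
  -- the event
  set A : ℝ → Set Ω := fun x =>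
    {ω | x < M ω ∧ (∑ i, X i ω) - M ω ≤ ε * M ω} with hA
  -- q i x
  set q : Fin n → ℝ → ENNReal := fun i x =>
    μ {ω | (∑ j ∈ Finset.univ.erase i, X j ω) ≤ ε * x} with hq
  have hsum_meas : ∀ i : Fin n, Measurable (fun ω => ∑ j ∈ Finset.univ.erase i, X j ω) :=
    fun i => Finset.measurable_sum _ (fun j _ => hmeas j)
  -- upper bound
  have hupper : ∀ x : ℝ, μ (A x) ≤ (n : ENNReal) * T x := by
    intro x
    have hsub : A x ⊆ ⋃ i, {ω | x < X i ω} := by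
      intro ω hω
      obtain ⟨i, _, hieq⟩ := Finset.exists_mem_eq_sup' (⟨i0, Finset.mem_univ _⟩ :
        (Finset.univ : Finset (Fin n)).Nonempty) (fun i => X i ω)
      exact Set.mem_iUnion.2 ⟨i, lt_of_lt_of_le hω.1 hieq.le⟩
    calc μ (A x) ≤ μ (⋃ i, {ω | x < X i ω}) := measure_mono hsub
      _ ≤ ∑' i, μ {ω | x < X i ω} := measure_iUnion_le _
      _ = ∑ i : Fin n, μ {ω | x < X i ω} := tsum_fintype _
      _ = ∑ _i : Fin n, T x := by simp_rw [hXi_tail]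
      _ = (n : ENNReal) * T x := by simp [Finset.card_univ, mul_comm]
  -- lower bound (for x > 0)
  have hlower : ∀ x : ℝ, 0 < x → T x * ∑ i, q i x ≤ μ (A x) := by
    intro x hx
    set B : Fin n → Set Ω := fun i =>
      X i ⁻¹' Set.Ioi x ∩ (fun ω => ∑ j ∈ Finset.univ.erase i, X j ω) ⁻¹' Set.Iic (ε * x)
      with hB
    have hBmeas : ∀ i, MeasurableSet (B i) :=
      fun i => ((hmeas i) measurableSet_Ioi).inter ((hsum_meas i) measurableSet_Iic)
    have hBsub : ∀ i, B i ⊆ A x := by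
      intro i ω hω
      obtain ⟨h1, h2⟩ := hω
      have hxM : x < M ω := lt_of_lt_of_le h1 (hle_M i ω)
      refine ⟨hxM, ?_⟩
      have hsplit : (∑ j, X j ω) = X i ω + ∑ j ∈ Finset.univ.erase i, X j ω :=
        (Finset.add_sum_erase _ _ (Finset.mem_univ i)).symm
      have : (∑ j, X j ω) - M ω ≤ ∑ j ∈ Finset.univ.erase i, X j ω := by
        rw [hsplit]; linarith [hle_M i ω]
      calc (∑ j, X j ω) - M ω ≤ ∑ j ∈ Finset.univ.erase i, X j ω := this
        _ ≤ ε * x := h2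
        _ ≤ ε * M ω := by nlinarith
    have hBdisj : Pairwise (Function.onFun Disjoint B) := by
      intro i j hij
      rw [Function.onFun, Set.disjoint_left]
      intro ω hωi hωj
      have hxj : x < X j ω := hωj.1
      have hjmem : j ∈ Finset.univ.erase i := Finset.mem_erase.2 ⟨hij.symm, Finset.mem_univ j⟩
      have hle : X j ω ≤ ∑ k ∈ Finset.univ.erase i, X k ω :=
        Finset.single_le_sum (fun k _ => hnonneg k ω) hjmem
      have h2 : (∑ k ∈ Finset.univ.erase i, X k ω) ≤ ε * x := hωi.2
      nlinarith
    have hBval : ∀ i, μ (B i) = T x * q i x := by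
      intro i
      have hind : IndepFun (X i) (∑ j ∈ Finset.univ.erase i, X j) μ :=
        (hindep.indepFun_finsetSum_of_notMem hmeas (Finset.notMem_erase i _)).symm
      have hmul := hind.measure_inter_preimage_eq_mul (s := Set.Ioi x) (t := Set.Iic (ε * x))
        measurableSet_Ioi measurableSet_Iic
      have e1 : μ (X i ⁻¹' Set.Ioi x) = T x := hXi_tail i x
      have e2 : μ ((∑ j ∈ Finset.univ.erase i, X j) ⁻¹' Set.Iic (ε * x)) = q i x := by
        congr 1
        ext ω
        simp [hq, Finset.sum_apply]
      have e3 : B i = X i ⁻¹' Set.Ioi x ∩ (∑ j ∈ Finset.univ.erase i, X j) ⁻¹' Set.Iic (ε * x) := by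
        ext ω
        simp [hB, Finset.sum_apply]
      rw [e3, hmul, e1, e2]
    calc T x * ∑ i, q i x = ∑ i, μ (B i) := by
          rw [Finset.mul_sum]; exact Finset.sum_congr rfl (fun i _ => (hBval i).symm)
      _ = ∑' i, μ (B i) := (tsum_fintype _).symm
      _ = μ (⋃ i, B i) := (measure_iUnion hBdisj hBmeas).symm
      _ ≤ μ (A x) := measure_mono (Set.iUnion_subset hBsub)
  -- q i tends to 1
  have hq_tendsto : ∀ i, Tendsto (fun x => q i x) atTop (nhds 1) := by
    intro i
    have hmono : Monotone (fun x : ℝ => {ω | (∑ j ∈ Finset.univ.erase i, X j ω) ≤ ε * x}) := by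
      intro a b hab ω hω
      simp only [Set.mem_setOf_eq] at hω ⊢
      nlinarith
    have hunion : (⋃ x : ℝ, {ω | (∑ j ∈ Finset.univ.erase i, X j ω) ≤ ε * x}) = Set.univ := by
      ext ω; simp only [Set.mem_iUnion, Set.mem_univ, iff_true, Set.mem_setOf_eq]
      exact ⟨(∑ j ∈ Finset.univ.erase i, X j ω) / ε, by
        rw [mul_div_cancel₀ _ (ne_of_gt hε0)]⟩
    have h2 := tendsto_measure_iUnion_atTop (μ := μ) hmono
    rw [hunion, measure_univ] at h2
    exact h2
  -- squeeze
  have hlow_tendsto : Tendsto (fun x => ∑ i : Fin n, q i x) atTop (nhds (n : ENNReal)) := by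
    have : Tendsto (fun x => ∑ i : Fin n, q i x) atTop
        (nhds (∑ _i : Fin n, (1 : ENNReal))) :=
      tendsto_finset_sum _ (fun i _ => hq_tendsto i)
    simpa [Finset.card_univ] using this
  refine tendsto_of_tendsto_of_tendsto_of_le_of_le' hlow_tendsto tendsto_const_nhds ?_ ?_
  · filter_upwards [eventually_gt_atTop (0 : ℝ)] with x hx
    rw [ENNReal.le_div_iff_mul_le (Or.inl (hT_ne0 x)) (Or.inl (hT_netop x))]
    calc (∑ i : Fin n, q i x) * T x = T x * ∑ i, q i x := mul_comm _ _
      _ ≤ μ (A x) := hlower x hx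
  · filter_upwards with x
    exact ENNReal.div_le_of_le_mul (hupper x)
end
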